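/- If A is a weakly irreducible nonnegative tensor of order m and dimension n with ρ(A) > 0, then A is strictly nonnegative. -/

import Mathlib

open Finset

noncomputable section

/-- `(A x^{m-1})_i` for a tensor of order `m'+1` and dimension `n`. -/
def tApply {n m' : ℕ} (A : Fin n → (Fin m' → Fin n) → ℝ) (x : Fin n → ℝ) (i : Fin n) : ℝ :=
  ∑ idx : Fin m' → Fin n, A i idx * ∏ k, x (idx k)

/-- Complex version of `tApply`. -/
def tApplyC {n m' : ℕ} (A : Fin n → (Fin m' → Fin n) → ℝ) (x : Fin n → ℂ) (i : Fin n) : ℂ :=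
  ∑ idx : Fin m' → Fin n, (A i idx : ℂ) * ∏ k, x (idx k)

/-- `lam` is an eigenvalue of the tensor `A`. -/
def IsEig {n m' : ℕ} (A : Fin n → (Fin m' → Fin n) → ℝ) (lam : ℂ) : Prop :=
  ∃ x : Fin n → ℂ, x ≠ 0 ∧ ∀ i, tApplyC A x i = lam * x i ^ m'

/-- The spectral radius of a tensor. -/
def specRad {n m' : ℕ} (A : Fin n → (Fin m' → Fin n) → ℝ) : ℝ :=
  sSup {r | ∃ lam, IsEig A lam ∧ r = ‖lam‖}

/-- The majorization matrix `M_A` of a tensor `A`. -/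
def major {n m' : ℕ} (A : Fin n → (Fin m' → Fin n) → ℝ) (i j : Fin n) : ℝ :=
  ∑ idx ∈ univ.filter (fun idx : Fin m' → Fin n => ∃ k, idx k = j), A i idx

/-- The majorization matrix of the principal sub-tensor `A_I`. -/
def subMajor {n m' : ℕ} (A : Fin n → (Fin m' → Fin n) → ℝ) (I : Finset (Fin n))
    (i j : Fin n) : ℝ :=
  ∑ idx ∈ univ.filter (fun idx : Fin m' → Fin n => (∃ k, idx k = j) ∧ ∀ k, idx k ∈ I),
    A i idx

/-- Irreducibility of (the principal submatrix on `I` of) a nonnegative matrix. -/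
def MatIrredOn {n : ℕ} (M : Fin n → Fin n → ℝ) (I : Finset (Fin n)) : Prop :=
  ∀ S ⊆ I, S.Nonempty → S ≠ I → ∃ i ∈ S, ∃ j ∈ I \ S, M i j ≠ 0

/-- A tensor is weakly irreducible if its majorization matrix is irreducible. -/
def WeaklyIrred {n m' : ℕ} (A : Fin n → (Fin m' → Fin n) → ℝ) : Prop :=
  MatIrredOn (major A) Finset.univ

/-- Weak irreducibility of the principal sub-tensor `A_I`. -/
def WeaklyIrredOn {n m' : ℕ} (A : Fin n → (Fin m' → Fin n) → ℝ) (I : Finset (Fin n)) : Prop :=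
  MatIrredOn (subMajor A I) I

/-- `(A_I e_I^{m-1})_i`, the action of the principal sub-tensor on the all-ones vector. -/
def subApplyOnes {n m' : ℕ} (A : Fin n → (Fin m' → Fin n) → ℝ) (I : Finset (Fin n))
    (i : Fin n) : ℝ :=
  ∑ idx ∈ univ.filter (fun idx : Fin m' → Fin n => ∀ k, idx k ∈ I), A i idx

/-- The spectral radius of the principal sub-tensor `A_I`. -/
def subSpecRad {n m' : ℕ} (A : Fin n → (Fin m' → Fin n) → ℝ) (I : Finset (Fin n)) : ℝ :=
  sSup {r | ∃ lam : ℂ, ∃ x : Fin n → ℂ, (∃ i ∈ I, x i ≠ 0) ∧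
    (∀ i ∈ I, (∑ idx ∈ univ.filter (fun idx : Fin m' → Fin n => ∀ k, idx k ∈ I),
      (A i idx : ℂ) * ∏ k, x (idx k)) = lam * x i ^ m') ∧ r = ‖lam‖}

/-- weakly irreducible with positive spectral radius implies strictly nonnegative. -/
theorem weakly_irreducible_strictly_nonneg {n m' : ℕ} (hm : 1 ≤ m') (hn : 1 ≤ n)
    (A : Fin n → (Fin m' → Fin n) → ℝ)
    (hA : ∀ i idx, 0 ≤ A i idx)
    (hirr : WeaklyIrred A)
    (hrho : 0 < specRad A) :
    ∀ i, 0 < tApply A (fun _ => (1 : ℝ)) i := by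
  intro i
  have hsum : tApply A (fun _ => (1 : ℝ)) i = ∑ idx : Fin m' → Fin n, A i idx := by
    simp [tApply]
  rw [hsum]
  rcases (Finset.sum_nonneg fun idx _ => hA i idx).lt_or_eq with h | h
  · exact h
  exfalso
  have hzero : ∀ idx, A i idx = 0 := fun idx =>
    (Finset.sum_eq_zero_iff_of_nonneg (fun idx _ => hA i idx)).mp h.symm idx (Finset.mem_univ _)
  by_cases hn2 : ({i} : Finset (Fin n)) = Finset.univ
  · -- n = 1 effectively: every index equals i, so every eigenvalue is 0
    have hall : ∀ j : Fin n, j = i := fun j =>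
      Finset.mem_singleton.mp (hn2 ▸ Finset.mem_univ j)
    have hle : specRad A ≤ 0 := by
      apply Real.sSup_le _ le_rfl
      rintro r ⟨lam, ⟨x, hx, heig⟩, rfl⟩
      obtain ⟨j, hj⟩ := Function.ne_iff.mp hx
      have hxi : x i ≠ 0 := (hall j) ▸ hj
      have h0 : tApplyC A x i = 0 := by
        apply Finset.sum_eq_zero
        intro idx _
        simp [hzero idx]
      have := heig i
      rw [h0] at this
      have hlam : lam = 0 := by
        rcases mul_eq_zero.mp this.symm with h' | h'
        · exact h'
        · exact absurd h' (pow_ne_zero _ hxi)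
      simp [hlam]
    linarith
  · obtain ⟨i', hi', j, hj, hmaj⟩ := hirr {i} (Finset.subset_univ _)
      ⟨i, Finset.mem_singleton_self i⟩ hn2
    have hi'' : i' = i := Finset.mem_singleton.mp hi'
    subst hi''
    exact hmaj (Finset.sum_eq_zero fun idx _ => hzero idx)
end
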